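/- Let X₁,...,X_d be independent standard normal random variables. For every ε > 0 there exists c > 0 (independent of d and of the weights) such that for all d and all weights α₁ ≥ ... ≥ α_d > 0 with Σ_j α_j = 1, it holds that P(Σ_{j=1}^d α_j X_j² ≤ c) ≤ ε. -/

import Mathlib

open MeasureTheory ProbabilityTheory Real
open scoped NNReal ENNReal

lemma aux_one_add_sum_le_prod {ι : Type*} (s : Finset ι) (f : ι → ℝ)
    (hf : ∀ j ∈ s, 0 ≤ f j) : 1 + ∑ j ∈ s, f j ≤ ∏ j ∈ s, (1 + f j) := by
  classical
  induction s using Finset.induction_on with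
  | empty => simp
  | @insert a s hni ih =>
    rw [Finset.sum_insert hni, Finset.prod_insert hni]
    have h1 : 0 ≤ f a := hf a (Finset.mem_insert_self _ _)
    have h2 : ∀ j ∈ s, 0 ≤ f j := fun j hj => hf j (Finset.mem_insert_of_mem hj)
    have h3 := ih h2
    have hsum : 0 ≤ ∑ j ∈ s, f j := Finset.sum_nonneg h2
    nlinarith [mul_le_mul_of_nonneg_left h3 (by linarith : (0:ℝ) ≤ 1 + f a)]

lemma aux_sqrt_prod {ι : Type*} (s : Finset ι) (f : ι → ℝ)
    (hf : ∀ j ∈ s, 0 ≤ f j) : Real.sqrt (∏ j ∈ s, f j) = ∏ j ∈ s, Real.sqrt (f j) := by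
  classical
  induction s using Finset.induction_on with
  | empty => simp
  | @insert a s hni ih =>
    rw [Finset.prod_insert hni, Finset.prod_insert hni,
      Real.sqrt_mul (hf a (Finset.mem_insert_self _ _)),
      ih (fun j hj => hf j (Finset.mem_insert_of_mem hj))]

lemma aux_gauss_int {b : ℝ} (hb : 0 < b) :
    ∫ x, Real.exp (-b * x ^ 2) ∂(gaussianReal 0 1) = (Real.sqrt (1 + 2 * b))⁻¹ := by
  rw [gaussianReal_of_var_ne_zero 0 one_ne_zero]
  have hpdf : gaussianPDF 0 1 =
      fun x => ((Real.toNNReal (gaussianPDFReal 0 1 x) : ℝ≥0) : ℝ≥0∞) := by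
    funext x; rfl
  rw [hpdf, integral_withDensity_eq_integral_smul
    ((measurable_gaussianPDFReal 0 1).real_toNNReal) _]
  have heq : ∀ x : ℝ, (Real.toNNReal (gaussianPDFReal 0 1 x)) • Real.exp (-b * x ^ 2)
      = (Real.sqrt (2 * π))⁻¹ * Real.exp (-(b + 1/2) * x ^ 2) := by
    intro x
    rw [NNReal.smul_def, Real.coe_toNNReal _ (gaussianPDFReal_nonneg 0 1 x),
      gaussianPDFReal_def]
    simp only [NNReal.coe_one, mul_one, sub_zero]
    rw [smul_eq_mul, mul_assoc, ← Real.exp_add]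
    congr 2
    ring
  simp_rw [heq]
  rw [integral_const_mul, integral_gaussian]
  have hb2 : (0:ℝ) < b + 1/2 := by linarith
  have h1 : π / (b + 1/2) = (2 * π) * (1 + 2 * b)⁻¹ := by
    field_simp
    ring
  rw [h1]
  have e1 : Real.sqrt (2 * π * (1 + 2 * b)⁻¹)
      = Real.sqrt (2 * π) * (Real.sqrt (1 + 2 * b))⁻¹ := by
    rw [Real.sqrt_mul (by positivity : (0:ℝ) ≤ 2 * π) ((1 + 2 * b)⁻¹), Real.sqrt_inv]
  rw [e1, inv_mul_cancel_left₀ (by positivity : (0:ℝ) < Real.sqrt (2 * π)).ne']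

lemma aux_mgf_sq {Ω : Type} [MeasurableSpace Ω] (μ : Measure Ω) (X : Ω → ℝ)
    (hX : Measurable X) (hmap : Measure.map X μ = gaussianReal 0 1)
    {a t : ℝ} (ha : 0 < a) (ht : t < 0) :
    mgf (fun ω => a * X ω ^ 2) μ t = (Real.sqrt (1 + 2 * (-t * a)))⁻¹ := by
  have hpos : 0 < -t * a := mul_pos (neg_pos.mpr ht) ha
  have h : (fun ω => Real.exp (t * (a * X ω ^ 2)))
      = fun ω => Real.exp (-(-t * a) * (X ω) ^ 2) := by
    funext ω; congr 1; ring
  have hg : AEStronglyMeasurable (fun x : ℝ => Real.exp (-(-t * a) * x ^ 2))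
      (Measure.map X μ) :=
    (Real.continuous_exp.comp (by continuity)).aestronglyMeasurable
  calc mgf (fun ω => a * X ω ^ 2) μ t
      = ∫ ω, Real.exp (-(-t * a) * (X ω) ^ 2) ∂μ := by rw [mgf, h]
    _ = ∫ x, Real.exp (-(-t * a) * x ^ 2) ∂(Measure.map X μ) :=
        (integral_map hX.aemeasurable hg).symm
    _ = (Real.sqrt (1 + 2 * (-t * a)))⁻¹ := by rw [hmap]; exact aux_gauss_int hpos

/-- Uniform anti-concentration: for every `ε > 0` there is `c > 0`, independent of the
dimension and the weights, such that `P(∑ αⱼ Xⱼ² ≤ c) ≤ ε` for all i.i.d. standard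
normals `X₁,…,X_d` and decreasing positive weights summing to one. -/
theorem stmt_11 :
    ∀ ε : ℝ, 0 < ε → ∃ c : ℝ, 0 < c ∧
      ∀ (Ω : Type) (_ : MeasurableSpace Ω) (μ : Measure Ω), IsProbabilityMeasure μ →
        ∀ (d : ℕ), 0 < d → ∀ (X : Fin d → Ω → ℝ),
          (∀ i, Measurable (X i)) →
          (∀ i, Measure.map (X i) μ = gaussianReal 0 1) →
          iIndepFun X μ →
          ∀ (α : Fin d → ℝ), Antitone α → (∀ j, 0 < α j) → (∑ j, α j = 1) →
            μ {ω | ∑ j, α j * (X j ω) ^ 2 ≤ c} ≤ ENNReal.ofReal ε := by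
  intro ε hε
  set s : ℝ := 2 / ε ^ 2 with hs_def
  have hs : 0 < s := by positivity
  refine ⟨Real.log 2 / s, by positivity, ?_⟩
  intro Ω mΩ μ hμ d hd X hXm hXmap hXind α hα hαpos hαsum
  set c := Real.log 2 / s with hc_def
  set t : ℝ := -s with ht_def
  have ht : t < 0 := by simp [ht_def, hs]
  set Y : Fin d → Ω → ℝ := fun j ω => α j * X j ω ^ 2 with hY_def
  have hYm : ∀ j, Measurable (Y j) := fun j => ((hXm j).pow_const 2).const_mul (α j)
  have hYind : iIndepFun Y μ :=
    hXind.comp (fun j x => α j * x ^ 2)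
      (fun j => (measurable_id.pow_const 2).const_mul (α j))
  have h_int : ∀ j ∈ Finset.univ, Integrable (fun ω => Real.exp (t * Y j ω)) μ := by
    intro j _
    refine Integrable.mono' (integrable_const 1)
      (((hYm j).const_mul t).exp.aestronglyMeasurable) (ae_of_all _ fun ω => ?_)
    rw [Real.norm_eq_abs, Real.abs_exp, Real.exp_le_one_iff]
    have h1 : 0 ≤ Y j ω := by
      have := (hαpos j).le
      positivity
    nlinarith
  have h_int_sum : Integrable (fun ω => Real.exp (t * (∑ j, Y j) ω)) μ :=
    hYind.integrable_exp_mul_sum hYm h_int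
  have hset : {ω | ∑ j, α j * (X j ω) ^ 2 ≤ c} = {ω | (∑ j, Y j) ω ≤ c} := by
    ext ω; simp [hY_def, Finset.sum_apply]
  have hcher := measure_le_le_exp_mul_mgf (X := ∑ j, Y j) (μ := μ) c ht.le h_int_sum
  have hmgf : mgf (∑ j, Y j) μ t = ∏ j, (Real.sqrt (1 + 2 * (s * α j)))⁻¹ := by
    rw [hYind.mgf_sum hYm]
    refine Finset.prod_congr rfl fun j _ => ?_
    have := aux_mgf_sq μ (X j) (hXm j) (hXmap j) (hαpos j) ht
    rw [hY_def]
    convert this using 4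
    simp [ht_def]
  have hprod : ∏ j, (Real.sqrt (1 + 2 * (s * α j)))⁻¹ ≤ (Real.sqrt (1 + 2 * s))⁻¹ := by
    have h1 : (1 : ℝ) + 2 * s ≤ ∏ j, (1 + 2 * (s * α j)) := by
      have := aux_one_add_sum_le_prod Finset.univ (fun j => 2 * (s * α j))
        (fun j _ => by have := (hαpos j).le; positivity)
      calc (1:ℝ) + 2 * s = 1 + ∑ j, 2 * (s * α j) := by
            rw [← Finset.mul_sum, ← Finset.mul_sum, hαsum]; ring
        _ ≤ _ := this
    rw [Finset.prod_inv_distrib, ← aux_sqrt_prod Finset.univ _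
      (fun j _ => by have := (hαpos j).le; positivity)]
    have h2 : (0:ℝ) < Real.sqrt (1 + 2 * s) := by positivity
    have h3 : Real.sqrt (1 + 2 * s) ≤ Real.sqrt (∏ j, (1 + 2 * (s * α j))) :=
      Real.sqrt_le_sqrt h1
    exact inv_anti₀ h2 h3
  have hexp : Real.exp (-t * c) = 2 := by
    rw [ht_def, neg_neg, hc_def, mul_div_cancel₀ _ hs.ne', Real.exp_log two_pos]
  have hsqrt : (Real.sqrt (1 + 2 * s))⁻¹ ≤ ε / 2 := by
    have h1 : Real.sqrt (2 * s) ≤ Real.sqrt (1 + 2 * s) := Real.sqrt_le_sqrt (by linarith)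
    have h2 : Real.sqrt (2 * s) = 2 / ε := by
      rw [hs_def]
      rw [show (2:ℝ) * (2 / ε ^ 2) = (2 / ε) ^ 2 by field_simp]
      exact Real.sqrt_sq (by positivity)
    have h3 : (0:ℝ) < 2 / ε := by positivity
    have h4 : (2 / ε : ℝ) ≤ Real.sqrt (1 + 2 * s) := h2 ▸ h1
    calc (Real.sqrt (1 + 2 * s))⁻¹ ≤ (2 / ε)⁻¹ := inv_anti₀ h3 h4
      _ = ε / 2 := by field_simp
  have hfin : (μ {ω | (∑ j, Y j) ω ≤ c}).toReal ≤ ε := by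
    calc (μ {ω | (∑ j, Y j) ω ≤ c}).toReal
        ≤ Real.exp (-t * c) * mgf (∑ j, Y j) μ t := hcher
      _ = 2 * ∏ j, (Real.sqrt (1 + 2 * (s * α j)))⁻¹ := by rw [hexp, hmgf]
      _ ≤ 2 * (ε / 2) := by
          have := hprod.trans hsqrt
          have hnn : 0 ≤ ∏ j, (Real.sqrt (1 + 2 * (s * α j)))⁻¹ :=
            Finset.prod_nonneg fun j _ => by positivity
          nlinarith
      _ = ε := by ring
  rw [hset, ← ENNReal.ofReal_toReal (measure_ne_top μ _)]
  exact ENNReal.ofReal_le_ofReal hfin
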